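/- Let g ∈ ℝ, r ∈ ℂ with |Re r| < 1, and σ ∈ ℝ with σ ≠ 0. Let θ(σ) = 1 if σ ≥ 0 and θ(σ) = 0 otherwise, and sign(σ) = σ/|σ|. Then (g/4)·θ(σ)·∫_ℝ e^{−|ζ|} e^{r(σ−ζ)} dζ − (g/4)·∫_0^∞ e^{−|ζ−σ|} e^{rζ} dζ = (g/4) · e^{−|σ|} / (r + sign(σ)). -/

import Mathlib

open MeasureTheory Set

lemma cexp_intOn_Ioi (c : ℂ) (hc : c.re < 0) (a : ℝ) :
    IntegrableOn (fun x : ℝ => Complex.exp (c * x)) (Ioi a) := by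
  have hg : IntegrableOn (fun x : ℝ => Real.exp (c.re * x)) (Ioi a) := by
    have := exp_neg_integrableOn_Ioi a (by linarith : (0:ℝ) < -c.re)
    simpa [neg_mul, neg_neg] using this
  refine hg.integrable.mono' ?_ ?_
  · exact (Complex.continuous_exp.comp
      (continuous_const.mul Complex.continuous_ofReal)).aestronglyMeasurable
  · filter_upwards with x
    have : ‖Complex.exp (c * x)‖ = Real.exp (c.re * x) := by
      rw [Complex.norm_exp]
      norm_num [Complex.mul_re]
    exact this.le

lemma cexp_integral_Ioi (c : ℂ) (hc : c.re < 0) (a : ℝ) :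
    ∫ x in Ioi a, Complex.exp (c * x) = -(Complex.exp (c * a) / c) := by
  have hc0 : c ≠ 0 := fun h => by simp [h] at hc
  have hderiv : ∀ x ∈ Ioi a,
      HasDerivAt (fun x : ℝ => Complex.exp (c * x) / c) (Complex.exp (c * x)) x := by
    intro x _
    have h1 : HasDerivAt (fun x : ℝ => (x : ℂ)) 1 x := Complex.ofRealCLM.hasDerivAt
    have h2 : HasDerivAt (fun x : ℝ => c * (x : ℂ)) c x := by
      simpa using h1.const_mul c
    have h3 := h2.cexp.div_const c
    simpa [mul_comm, mul_div_assoc, mul_div_cancel_left₀ _ hc0] using h3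
  have htend : Filter.Tendsto (fun x : ℝ => Complex.exp (c * x) / c)
      Filter.atTop (nhds 0) := by
    rw [tendsto_zero_iff_norm_tendsto_zero]
    have hnorm : ∀ x : ℝ, ‖Complex.exp (c * x) / c‖ = Real.exp (-((-c.re) * x)) / ‖c‖ := by
      intro x
      rw [norm_div, Complex.norm_exp]
      norm_num [Complex.mul_re]
    simp only [hnorm]
    have h1 : Filter.Tendsto (fun x : ℝ => (-c.re) * x) Filter.atTop Filter.atTop :=
      Filter.Tendsto.const_mul_atTop (by linarith) Filter.tendsto_id
    have h2 : Filter.Tendsto (fun x : ℝ => Real.exp (-((-c.re) * x)))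
        Filter.atTop (nhds 0) := Real.tendsto_exp_neg_atTop_nhds_zero.comp h1
    simpa using h2.div_const ‖c‖
  have hcont : ContinuousWithinAt (fun x : ℝ => Complex.exp (c * x) / c) (Ici a) a :=
    ((Complex.continuous_exp.comp (continuous_const.mul Complex.continuous_ofReal)).div_const
      c).continuousWithinAt
  rw [integral_Ioi_of_hasDerivAt_of_tendsto hcont hderiv (cexp_intOn_Ioi c hc a) htend]
  ring

lemma cexp_intOn_Iic (c : ℂ) (hc : 0 < c.re) (a : ℝ) :
    IntegrableOn (fun x : ℝ => Complex.exp (c * x)) (Iic a) := by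
  have hemb : MeasurableEmbedding fun x : ℝ => -x :=
    (Homeomorph.neg ℝ).isClosedEmbedding.measurableEmbedding
  have hmap : Measure.map (fun x : ℝ => -x) (volume : Measure ℝ) = volume :=
    Measure.map_neg_eq_self _
  rw [show (volume : Measure ℝ) = Measure.map (fun x : ℝ => -x) volume from hmap.symm,
    hemb.integrableOn_map_iff]
  have hpre : ((fun x : ℝ => -x) ⁻¹' Iic a) = Ici (-a) := by
    ext x; simp [le_neg]
  rw [hpre, integrableOn_Ici_iff_integrableOn_Ioi]
  refine (cexp_intOn_Ioi (-c) (by simpa using hc) (-a)).congr_fun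
    (fun x _ => ?_) measurableSet_Ioi
  simp only [Function.comp]
  push_cast
  ring_nf

lemma cexp_integral_Iic (c : ℂ) (hc : 0 < c.re) (a : ℝ) :
    ∫ x in Iic a, Complex.exp (c * x) = Complex.exp (c * a) / c := by
  have h := integral_comp_neg_Ioi (-a) (fun x : ℝ => Complex.exp (c * x))
  simp only [neg_neg] at h
  rw [← h]
  have hfun : (fun x : ℝ => Complex.exp (c * ((-x : ℝ) : ℂ))) = fun x : ℝ =>
      Complex.exp (-c * x) := funext fun x => by push_cast; ring_nf
  rw [show (∫ x in Ioi (-a), Complex.exp (c * ((-x : ℝ) : ℂ)))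
      = ∫ x in Ioi (-a), Complex.exp (-c * x) from by rw [hfun]]
  rw [cexp_integral_Ioi (-c) (by simpa using hc) (-a), div_neg, neg_neg]
  congr 1
  push_cast
  ring_nf

/-- Canonical momentum density of the non-local harmonic oscillator (kernel e^{−|ζ|})
on the exponential trajectory q(σ) = e^{rσ}, away from the Dirac-delta at σ = 0:
(g/4)θ(σ)(K∗q)(σ) − (g/4)∫₀^∞ K(ζ−σ)q(ζ)dζ = (g/4) e^{−|σ|}/(r + sign σ). -/
theorem stmt9 (g : ℝ) (r : ℂ) (hr : |r.re| < 1) (σ : ℝ) (hσ : σ ≠ 0) :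
    ((g : ℂ) / 4) * (if 0 ≤ σ then (1 : ℂ) else 0) *
        (∫ ζ : ℝ, (Real.exp (-|ζ|) : ℂ) * Complex.exp (r * ((σ : ℂ) - ζ)))
      - ((g : ℂ) / 4) *
        (∫ ζ in Set.Ioi (0 : ℝ), (Real.exp (-|ζ - σ|) : ℂ) * Complex.exp (r * ζ))
      = ((g : ℂ) / 4) * (Real.exp (-|σ|) : ℂ) / (r + ((σ / |σ| : ℝ) : ℂ)) := by
  obtain ⟨hr1, hr2⟩ := abs_lt.mp hr
  have h1p : (1 : ℂ) + r ≠ 0 := fun h => by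
    have := congrArg Complex.re h; simp at this; linarith
  have h1m : (1 : ℂ) - r ≠ 0 := fun h => by
    have := congrArg Complex.re h; simp at this; linarith
  have hrm1 : r - 1 ≠ 0 := fun h => by
    have := congrArg Complex.re h; simp at this; linarith
  rcases lt_or_gt_of_ne hσ with hneg | hpos
  · -- σ < 0
    have hB : (∫ ζ in Set.Ioi (0 : ℝ), (Real.exp (-|ζ - σ|) : ℂ) * Complex.exp (r * ζ))
        = Complex.exp (σ : ℂ) * -(1 / (r - 1)) := by
      rw [setIntegral_congr_fun measurableSet_Ioi
        (g := fun ζ : ℝ => Complex.exp (σ : ℂ) * Complex.exp ((r - 1) * ζ))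
        (fun ζ hζ => by
          have hζ0 : (0:ℝ) < ζ := hζ
          rw [abs_of_nonneg (by linarith)]
          push_cast
          rw [← Complex.exp_add, ← Complex.exp_add]
          congr 1
          push_cast
          ring)]
      rw [integral_const_mul, cexp_integral_Ioi (r - 1) (by simp; linarith) 0]
      norm_num
    have hsign : ((σ / |σ| : ℝ) : ℂ) = -1 := by
      rw [abs_of_neg hneg, div_neg, div_self hσ]
      norm_num
    have hre : ((Real.exp (-|σ|) : ℝ) : ℂ) = Complex.exp (σ : ℂ) := by
      rw [abs_of_neg hneg, neg_neg, Complex.ofReal_exp]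
    rw [if_neg (not_le.mpr hneg), hB, hsign, hre]
    have hrm1' : r + (-1) ≠ 0 := by
      intro h; apply hrm1; linear_combination h
    rw [show r + (-1 : ℂ) = r - 1 from by ring]
    field_simp
    ring
  · -- σ > 0
    have hcont : Continuous fun ζ : ℝ => (Real.exp (-|ζ - σ|) : ℂ) * Complex.exp (r * ζ) := by
      fun_prop
    -- Full line integral
    have hIic : IntegrableOn (fun ζ : ℝ => (Real.exp (-|ζ|) : ℂ) *
        Complex.exp (r * ((σ : ℂ) - ζ))) (Iic 0) := by
      refine IntegrableOn.congr_fun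
        ((cexp_intOn_Iic (1 - r) (by simp; linarith) 0).const_mul (Complex.exp (r * σ)))
        (fun ζ hζ => ?_) measurableSet_Iic
      have hζ0 : ζ ≤ (0:ℝ) := hζ
      rw [abs_of_nonpos hζ0]
      push_cast
      rw [← Complex.exp_add, ← Complex.exp_add]
      congr 1
      push_cast
      ring
    have hIoi : IntegrableOn (fun ζ : ℝ => (Real.exp (-|ζ|) : ℂ) *
        Complex.exp (r * ((σ : ℂ) - ζ))) (Ioi 0) := by
      refine IntegrableOn.congr_fun
        ((cexp_intOn_Ioi (-(1 + r)) (by simp; linarith) 0).const_mul (Complex.exp (r * σ)))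
        (fun ζ hζ => ?_) measurableSet_Ioi
      have hζ0 : (0:ℝ) < ζ := hζ
      rw [abs_of_nonneg hζ0.le]
      push_cast
      rw [← Complex.exp_add, ← Complex.exp_add]
      congr 1
      push_cast
      ring
    have hA : (∫ ζ : ℝ, (Real.exp (-|ζ|) : ℂ) * Complex.exp (r * ((σ : ℂ) - ζ)))
        = Complex.exp (r * σ) * (1 / (1 - r) + 1 / (1 + r)) := by
      rw [← intervalIntegral.integral_Iic_add_Ioi hIic hIoi]
      have e1 : (∫ ζ in Iic (0:ℝ), (Real.exp (-|ζ|) : ℂ) * Complex.exp (r * ((σ : ℂ) - ζ)))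
          = Complex.exp (r * σ) * (1 / (1 - r)) := by
        rw [setIntegral_congr_fun measurableSet_Iic
          (g := fun ζ : ℝ => Complex.exp (r * σ) * Complex.exp ((1 - r) * ζ))
          (fun ζ hζ => by
            have hζ0 : ζ ≤ (0:ℝ) := hζ
            rw [abs_of_nonpos hζ0]
            push_cast
            rw [← Complex.exp_add, ← Complex.exp_add]
            congr 1
            push_cast
            ring)]
        rw [integral_const_mul, cexp_integral_Iic (1 - r) (by simp; linarith) 0]
        simp
      have e2 : (∫ ζ in Ioi (0:ℝ), (Real.exp (-|ζ|) : ℂ) * Complex.exp (r * ((σ : ℂ) - ζ)))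
          = Complex.exp (r * σ) * (1 / (1 + r)) := by
        rw [setIntegral_congr_fun measurableSet_Ioi
          (g := fun ζ : ℝ => Complex.exp (r * σ) * Complex.exp ((-(1 + r)) * ζ))
          (fun ζ hζ => by
            have hζ0 : (0:ℝ) < ζ := hζ
            rw [abs_of_nonneg hζ0.le]
            push_cast
            rw [← Complex.exp_add, ← Complex.exp_add]
            congr 1
            push_cast
            ring)]
        rw [integral_const_mul, cexp_integral_Ioi (-(1 + r)) (by simp; linarith) 0,
          Complex.ofReal_zero, mul_zero, Complex.exp_zero, div_neg, neg_neg]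
      rw [e1, e2, mul_add]
    -- Half line integral, split at σ
    have hsplit : Ioc (0:ℝ) σ ∪ Ioi σ = Ioi 0 := Ioc_union_Ioi_eq_Ioi hpos.le
    have hInt1 : IntegrableOn (fun ζ : ℝ => (Real.exp (-|ζ - σ|) : ℂ) *
        Complex.exp (r * ζ)) (Ioc 0 σ) := hcont.integrableOn_Ioc
    have hInt2 : IntegrableOn (fun ζ : ℝ => (Real.exp (-|ζ - σ|) : ℂ) *
        Complex.exp (r * ζ)) (Ioi σ) := by
      refine IntegrableOn.congr_fun
        ((cexp_intOn_Ioi (r - 1) (by simp; linarith) σ).const_mul (Complex.exp (σ : ℂ)))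
        (fun ζ hζ => ?_) measurableSet_Ioi
      have hζ0 : σ < ζ := hζ
      rw [abs_of_nonneg (by linarith)]
      push_cast
      rw [← Complex.exp_add, ← Complex.exp_add]
      congr 1
      push_cast
      ring
    have hB : (∫ ζ in Set.Ioi (0 : ℝ), (Real.exp (-|ζ - σ|) : ℂ) * Complex.exp (r * ζ))
        = Complex.exp (-(σ:ℂ)) * ((Complex.exp ((1 + r) * σ) - 1) / (1 + r))
          + Complex.exp (σ:ℂ) * -(Complex.exp ((r - 1) * σ) / (r - 1)) := by
      rw [← hsplit, setIntegral_union (Ioc_disjoint_Ioi le_rfl) measurableSet_Ioi hInt1 hInt2]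
      have e1 : (∫ ζ in Ioc (0:ℝ) σ, (Real.exp (-|ζ - σ|) : ℂ) * Complex.exp (r * ζ))
          = Complex.exp (-(σ:ℂ)) * ((Complex.exp ((1 + r) * σ) - 1) / (1 + r)) := by
        rw [setIntegral_congr_fun measurableSet_Ioc
          (g := fun ζ : ℝ => Complex.exp (-(σ:ℂ)) * Complex.exp ((1 + r) * ζ))
          (fun ζ hζ => by
            rw [abs_of_nonpos (by linarith [hζ.2] : ζ - σ ≤ 0)]
            push_cast
            rw [← Complex.exp_add, ← Complex.exp_add]
            congr 1
            push_cast
            ring)]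
        rw [integral_const_mul, ← intervalIntegral.integral_of_le hpos.le,
          integral_exp_mul_complex h1p, Complex.ofReal_zero, mul_zero, Complex.exp_zero]
      have e2 : (∫ ζ in Ioi σ, (Real.exp (-|ζ - σ|) : ℂ) * Complex.exp (r * ζ))
          = Complex.exp (σ:ℂ) * -(Complex.exp ((r - 1) * σ) / (r - 1)) := by
        rw [setIntegral_congr_fun measurableSet_Ioi
          (g := fun ζ : ℝ => Complex.exp (σ:ℂ) * Complex.exp ((r - 1) * ζ))
          (fun ζ hζ => by
            have hζ0 : σ < ζ := hζ
            rw [abs_of_nonneg (by linarith)]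
            push_cast
            rw [← Complex.exp_add, ← Complex.exp_add]
            congr 1
            push_cast
            ring)]
        rw [integral_const_mul, cexp_integral_Ioi (r - 1) (by simp; linarith) σ]
      rw [e1, e2]
    have hsign : ((σ / |σ| : ℝ) : ℂ) = 1 := by
      rw [abs_of_pos hpos, div_self (ne_of_gt hpos)]
      norm_num
    have hre : ((Real.exp (-|σ|) : ℝ) : ℂ) = Complex.exp (-(σ:ℂ)) := by
      rw [abs_of_pos hpos]; push_cast; ring_nf
    rw [if_pos hpos.le, hA, hB, hsign, hre]
    have key1 : Complex.exp (-(σ:ℂ)) * Complex.exp ((1 + r) * σ) = Complex.exp (r * σ) := by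
      rw [← Complex.exp_add]; congr 1; ring
    have key2 : Complex.exp (σ:ℂ) * Complex.exp ((r - 1) * σ) = Complex.exp (r * σ) := by
      rw [← Complex.exp_add]; congr 1; ring
    have hflip : (1 - r)⁻¹ + (r - 1)⁻¹ = 0 := by
      rw [show (1:ℂ) - r = -(r - 1) from by ring, inv_neg]
      ring
    linear_combination (-(g:ℂ)/4/(1+r)) * key1 + ((g:ℂ)/4/(r-1)) * key2
      + ((g:ℂ) * Complex.exp (r * σ) / 4) * hflip
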